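/- Let Δ ≥ 4 be even and let G be a connected infinite Δ-regular graph. Suppose that for every finite subset C of V(G): (1) there are two disjoint non-empty subsets S_B and S_AB of V(G) − C such that deg_{S_B}(v) ≥ Δ/2 for every v ∈ S_AB and deg_{S_B}(u) = deg_{S_AB}(u) = Δ/2 for every u ∈ S_B; and (2) G − C has a (Δ/2)-regular subgraph. Then Ω_G ⊆ Ω_{L_Δ}. -/
import Mathlib


namespace Contagion

open scoped BigOperators

/-- The three strategies in the contagion game. -/
inductive Strat
  | A | B | AB
deriving DecidableEq

/-- Pairwise payoff to a player using the first strategy against a neighbor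
using the second strategy, in the contagion game with parameters `q, r`. -/
noncomputable def pairPayoff (q r : ℝ) : Strat → Strat → ℝ
  | .A, .A => 1 - q
  | .A, .B => 0
  | .A, .AB => 1 - q
  | .B, .A => 0
  | .B, .B => q
  | .B, .AB => q
  | .AB, .A => 1 - q - r
  | .AB, .B => q - r
  | .AB, .AB => max q (1 - q) - r

variable {V : Type*}

/-- Total payoff to vertex `v` for playing strategy `s` against profile `σ`. -/
noncomputable def totalPayoff (G : SimpleGraph V) (q r : ℝ) (σ : V → Strat)
    (v : V) (s : Strat) : ℝ :=
  ∑ᶠ u ∈ G.neighborSet v, pairPayoff q r s (σ u)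

/-- `s` is a best response of vertex `v` to the profile `σ`. -/
def IsBestResponse (G : SimpleGraph V) (q r : ℝ) (σ : V → Strat) (v : V) (s : Strat) : Prop :=
  ∀ s' : Strat, totalPayoff G q r σ v s' ≤ totalPayoff G q r σ v s

/-- Strategy `A` becomes epidemic in the contagion game `(G, q, r)`:
there are a finite initial set `S₀` (playing `A`, everybody else playing `B`) and a
sequence `α` of vertices in which every vertex appears at least once, such that updating
at step `n` the vertex `α n` to a best response makes every vertex eventually adopt `A`. -/
def Epidemic (G : SimpleGraph V) (q r : ℝ) : Prop :=
  ∃ (S₀ : Set V) (α : ℕ → V) (σ : ℕ → V → Strat),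
    S₀.Finite ∧
    Function.Surjective α ∧
    (∀ v ∈ S₀, σ 0 v = Strat.A) ∧
    (∀ v ∉ S₀, σ 0 v = Strat.B) ∧
    (∀ n, IsBestResponse G q r (σ n) (α n) (σ (n + 1) (α n))) ∧
    (∀ n v, v ≠ α n → σ (n + 1) v = σ n v) ∧
    (∀ v, ∃ n, σ n v = Strat.A)

/-- The epidemic region `Ω_G ⊆ ℝ²` of `G`. -/
def epidemicRegion (G : SimpleGraph V) : Set (ℝ × ℝ) :=
  {p | 0 < p.1 ∧ p.1 < 1 ∧ 0 < p.2 ∧ Epidemic G p.1 p.2}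

/-- `G` is `Δ`-regular: every vertex has exactly `Δ` neighbors. -/
def IsRegular (G : SimpleGraph V) (Δ : ℕ) : Prop :=
  ∀ v, (G.neighborSet v).ncard = Δ

/-- The number of neighbors of `v` lying in the set `S`. -/
noncomputable def degIn (G : SimpleGraph V) (v : V) (S : Set V) : ℕ :=
  (G.neighborSet v ∩ S).ncard

/-- `RT Δ`: the infinite rooted tree in which the root (the empty list) has `Δ - 1`
children and every other vertex also has `Δ - 1` children (hence degree `Δ`). -/
def RT (Δ : ℕ) : SimpleGraph (List (Fin (Δ - 1))) :=
  SimpleGraph.fromRel (fun l l' => ∃ a : Fin (Δ - 1), l' = a :: l)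

/-- `G` contains a subgraph isomorphic to `RT Δ`. -/
def HasRTCopy (Δ : ℕ) (G : SimpleGraph V) : Prop :=
  ∃ f : List (Fin (Δ - 1)) → V,
    Function.Injective f ∧ ∀ x y, (RT Δ).Adj x y → G.Adj (f x) (f y)

/-- The thick half line `HL_Δ` (for even `Δ`), columns indexed by `ℕ` starting with the
first column `0`; `(k, i)` and `(l, j)` are adjacent exactly when `|k - l| = 1`. -/
def HL (Δ : ℕ) : SimpleGraph (ℕ × Fin (Δ / 2)) :=
  SimpleGraph.fromRel (fun x y => y.1 = x.1 + 1)

/-- The epidemic region of the infinite `Δ`-regular tree: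
`{(q,r) : q,r > 0, r ≥ ((Δ-1)/Δ)q, q ≤ 1/Δ} ∪ {(q,r) : q,r > 0, 2q + Δr ≤ 1}`. -/
def treeRegion (Δ : ℕ) : Set (ℝ × ℝ) :=
  {p | 0 < p.1 ∧ 0 < p.2 ∧ ((Δ : ℝ) - 1) / Δ * p.1 ≤ p.2 ∧ p.1 ≤ 1 / Δ} ∪
  {p | 0 < p.1 ∧ 0 < p.2 ∧ 2 * p.1 + Δ * p.2 ≤ 1}

/-- The epidemic region of the thick line `L_Δ`:
`{(q,r) : 0 < q ≤ 1/2, r ≥ q/2} ∪ {(q,r) : q,r > 0, r ≤ q/2, 2q + 2r ≤ 1}`. -/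
def thickLineRegion : Set (ℝ × ℝ) :=
  {p | 0 < p.1 ∧ p.1 ≤ 1 / 2 ∧ p.1 / 2 ≤ p.2} ∪
  {p | 0 < p.1 ∧ 0 < p.2 ∧ p.2 ≤ p.1 / 2 ∧ 2 * p.1 + 2 * p.2 ≤ 1}

/-- `(SAB, SB)` is a blocking structure for the contagion game `(G, q, r)`
on a `Δ`-regular graph `G`. -/
def IsBlockingStructure (G : SimpleGraph V) (Δ : ℕ) (q r : ℝ) (SAB SB : Set V) : Prop :=
  Disjoint SAB SB ∧ (SAB.Nonempty ∨ SB.Nonempty) ∧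
  (∀ v ∈ SAB, r / q * Δ < (degIn G v SB : ℝ)) ∧
  ∀ v ∈ SB,
    (1 - q - r) * Δ < (1 - q) * (degIn G v SB : ℝ) + min q (1 - q) * (degIn G v SAB : ℝ) ∧
    (1 - q) * Δ < (degIn G v SB : ℝ) + q * (degIn G v SAB : ℝ)

/-- The two strategies of the `A`-`B` coordination game. -/
inductive CStrat
  | A | B
deriving DecidableEq

/-- Pairwise payoff in the `A`-`B` coordination game `(G, q)`. -/
noncomputable def cPairPayoff (q : ℝ) : CStrat → CStrat → ℝ
  | .A, .A => 1 - q
  | .A, .B => 0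
  | .B, .A => 0
  | .B, .B => q

/-- Total payoff to `v` for playing `s` against profile `σ` in the coordination game. -/
noncomputable def cTotalPayoff (G : SimpleGraph V) (q : ℝ) (σ : V → CStrat)
    (v : V) (s : CStrat) : ℝ :=
  ∑ᶠ u ∈ G.neighborSet v, cPairPayoff q s (σ u)

/-- `s` is a best response of `v` to `σ` in the coordination game. -/
def CIsBestResponse (G : SimpleGraph V) (q : ℝ) (σ : V → CStrat) (v : V) (s : CStrat) : Prop :=
  ∀ s' : CStrat, cTotalPayoff G q σ v s' ≤ cTotalPayoff G q σ v s

/-- Strategy `A` becomes epidemic in the coordination game `(G, q)` starting from the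
initial set `S₀`. -/
def CoordEpidemicFrom (G : SimpleGraph V) (q : ℝ) (S₀ : Set V) : Prop :=
  ∃ (α : ℕ → V) (σ : ℕ → V → CStrat),
    Function.Surjective α ∧
    (∀ v ∈ S₀, σ 0 v = CStrat.A) ∧
    (∀ v ∉ S₀, σ 0 v = CStrat.B) ∧
    (∀ n, CIsBestResponse G q (σ n) (α n) (σ (n + 1) (α n))) ∧
    (∀ n v, v ≠ α n → σ (n + 1) v = σ n v) ∧
    (∀ v, ∃ n, σ n v = CStrat.A)

/-- Strategy `A` becomes epidemic in the coordination game `(G, q)`. -/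
def CoordEpidemic (G : SimpleGraph V) (q : ℝ) : Prop :=
  ∃ S₀ : Set V, S₀.Finite ∧ CoordEpidemicFrom G q S₀

private lemma sum_three' {V : Type*} (N : Finset V) (σ : V → Strat) (f : Strat → ℝ) :
    ∑ u ∈ N, f (σ u) =
      (N.filter fun u => σ u = Strat.A).card * f Strat.A +
      (N.filter fun u => σ u = Strat.B).card * f Strat.B +
      (N.filter fun u => σ u = Strat.AB).card * f Strat.AB := by
  classical
  induction N using Finset.induction with
  | empty => simp
  | @insert a N ha ih =>
      rw [Finset.sum_insert ha, Finset.filter_insert, Finset.filter_insert,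
        Finset.filter_insert, ih]
      have h1 : ∀ p : V → Prop, ∀ _ : DecidablePred p, a ∉ N.filter p :=
        fun p _ h => ha (Finset.mem_of_mem_filter a h)
      cases hs : σ a <;>
        simp [Finset.card_insert_of_notMem (h1 _ _)] <;> ring

set_option maxHeartbeats 2000000 in
/-- Corollary: Let `Δ ≥ 4` be even and `G` a connected infinite `Δ`-regular
graph such that for every finite `C ⊆ V(G)` one can find disjoint nonempty
`S_B, S_AB ⊆ V(G) - C` with `deg_{S_B}(v) ≥ Δ/2` for all `v ∈ S_AB` and
`deg_{S_B}(u) = deg_{S_AB}(u) = Δ/2` for all `u ∈ S_B`, and `G - C` has a `(Δ/2)`-regular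
subgraph.  Then `Ω_G ⊆ Ω_{L_Δ}`. -/
theorem region_subset_thickLine {V : Type*} (Δ : ℕ) (hΔ : 4 ≤ Δ) (hEven : Even Δ)
    (G : SimpleGraph V) (hInf : Infinite V) (hConn : G.Connected) (hReg : IsRegular G Δ)
    (h1 : ∀ C : Set V, C.Finite →
      ∃ SB SAB : Set V, SB.Nonempty ∧ SAB.Nonempty ∧ Disjoint SB SAB ∧
        SB ⊆ Cᶜ ∧ SAB ⊆ Cᶜ ∧
        (∀ v ∈ SAB, Δ / 2 ≤ degIn G v SB) ∧
        (∀ u ∈ SB, degIn G u SB = Δ / 2 ∧ degIn G u SAB = Δ / 2))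
    (h2 : ∀ C : Set V, C.Finite →
      ∃ H : G.Subgraph, H.verts.Nonempty ∧ H.verts ⊆ Cᶜ ∧
        ∀ v ∈ H.verts, (H.neighborSet v).ncard = Δ / 2) :
    epidemicRegion G ⊆ thickLineRegion := by
  classical
  rintro ⟨q, r⟩ ⟨hq0, hq1, hr0, hEp⟩
  by_contra hnot
  have hcase : (1/2 < q) ∨ (q ≤ 1/2 ∧ r < q/2 ∧ 1 < 2*q + 2*r) := by
    simp only [thickLineRegion, Set.mem_union, Set.mem_setOf_eq, not_or] at hnot
    push_neg at hnot
    rcases le_or_gt q (1/2) with h | h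
    · have h1' := hnot.1 hq0 h
      exact Or.inr ⟨h, h1', hnot.2 hq0 hr0 h1'.le⟩
    · exact Or.inl h
  obtain ⟨S₀, α, σ, hfinS, hsurj, hA0, hB0, hbr, hstay, hall⟩ := hEp
  obtain ⟨SB, SAB, hSBne, hSABne, hdisj, hSBc, hSABc, hdegAB, hdegB⟩ := h1 S₀ hfinS
  obtain ⟨m, hm⟩ := hEven
  have hΔ2 : Δ = 2 * m := by omega
  have hhalf : Δ / 2 = m := by omega
  have hm2 : 2 ≤ m := by omega
  have hmR : (2:ℝ) ≤ (m:ℝ) := by exact_mod_cast hm2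
  have hnfin : ∀ v : V, (G.neighborSet v).Finite := by
    intro v
    by_contra h
    have h2' := hReg v
    rw [Set.Infinite.ncard h] at h2'
    omega
  have key : ∀ n, (∀ v ∈ SB, σ n v = Strat.B) ∧ (∀ v ∈ SAB, σ n v ≠ Strat.A) := by
    intro n
    induction n with
    | zero =>
        refine ⟨fun v hv => hB0 v (hSBc hv), fun v hv => ?_⟩
        rw [hB0 v (hSABc hv)]
        simp
    | succ n ih =>
        have main : ∀ v, (v ∈ SB → σ (n+1) v = Strat.B) ∧
            (v ∈ SAB → σ (n+1) v ≠ Strat.A) := by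
          intro v
          by_cases hva : v = α n
          case neg =>
            rw [hstay n v hva]
            exact ⟨fun hv => ih.1 v hv, fun hv => ih.2 v hv⟩
          case pos =>
          subst hva
          set v := α n with hv_def
          have hbrv : IsBestResponse G q r (σ n) v (σ (n+1) v) := hbr n
          set N := (hnfin v).toFinset with hN_def
          have hNcard : N.card = Δ := by
            rw [← Set.ncard_eq_toFinset_card _ (hnfin v)]; exact hReg v
          have hdegIn : ∀ S : Set V, degIn G v S = (N.filter (· ∈ S)).card := by
            intro S
            rw [degIn, ← Set.ncard_coe_finset]
            congr 1
            ext u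
            simp [hN_def, Set.Finite.mem_toFinset]
          have hpay : ∀ s, totalPayoff G q r (σ n) v s =
              (N.filter fun u => σ n u = Strat.A).card * pairPayoff q r s Strat.A +
              (N.filter fun u => σ n u = Strat.B).card * pairPayoff q r s Strat.B +
              (N.filter fun u => σ n u = Strat.AB).card * pairPayoff q r s Strat.AB := by
            intro s
            rw [totalPayoff, ← (hnfin v).coe_toFinset, finsum_mem_coe_finset, sum_three']
          set cA := (N.filter fun u => σ n u = Strat.A).card with hcA_def
          set cB := (N.filter fun u => σ n u = Strat.B).card with hcB_def
          set cAB := (N.filter fun u => σ n u = Strat.AB).card with hcAB_def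
          have hsumc : (cA : ℝ) + cB + cAB = 2 * m := by
            have h := sum_three' N (σ n) (fun _ => (1:ℝ))
            simp only [Finset.sum_const, nsmul_eq_mul, mul_one] at h
            rw [hNcard, hΔ2] at h
            push_cast at h
            linarith
          have hSBsub : N.filter (· ∈ SB) ⊆ N.filter fun u => σ n u = Strat.B := by
            intro u hu
            rw [Finset.mem_filter] at hu ⊢
            exact ⟨hu.1, ih.1 u hu.2⟩
          constructor
          · -- v ∈ SB
            intro hv
            have hFB : (N.filter (· ∈ SB)).card = m := by
              rw [← hdegIn, (hdegB v hv).1, hhalf]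
            have hFAB : (N.filter (· ∈ SAB)).card = m := by
              rw [← hdegIn, (hdegB v hv).2, hhalf]
            have hdisjF : Disjoint (N.filter (· ∈ SB)) (N.filter (· ∈ SAB)) := by
              rw [Finset.disjoint_left]
              intro u hu hu'
              exact Set.disjoint_left.mp hdisj (Finset.mem_filter.mp hu).2
                (Finset.mem_filter.mp hu').2
            have hunion : N.filter (· ∈ SB) ∪ N.filter (· ∈ SAB) = N := by
              apply Finset.eq_of_subset_of_card_le
              · exact Finset.union_subset (Finset.filter_subset _ _) (Finset.filter_subset _ _)
              · rw [Finset.card_union_of_disjoint hdisjF, hFB, hFAB, hNcard]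
                omega
            have hcov : ∀ u ∈ N, u ∈ SB ∨ u ∈ SAB := by
              intro u hu
              rw [← hunion, Finset.mem_union, Finset.mem_filter, Finset.mem_filter] at hu
              tauto
            have hcA0 : cA = 0 := by
              rw [hcA_def, Finset.card_eq_zero, Finset.eq_empty_iff_forall_notMem]
              intro u hu
              rw [Finset.mem_filter] at hu
              rcases hcov u hu.1 with h | h
              · rw [ih.1 u h] at hu; exact Strat.noConfusion hu.2
              · exact ih.2 u h hu.2
            have hcBm : (m : ℝ) ≤ (cB : ℝ) := by
              have := Finset.card_le_card hSBsub
              rw [hFB] at this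
              exact_mod_cast this
            have hcA0R : (cA : ℝ) = 0 := by rw [hcA0]; simp
            have hcABm : (cAB : ℝ) ≤ m := by linarith
            have hcABpos : (0:ℝ) ≤ (cAB : ℝ) := Nat.cast_nonneg _
            have hA_lt_B : totalPayoff G q r (σ n) v Strat.A <
                totalPayoff G q r (σ n) v Strat.B := by
              rw [hpay, hpay]
              simp only [pairPayoff]
              rcases hcase with hq | ⟨hq, hrq, hqr⟩
              · nlinarith [mul_pos hq0 (show (0:ℝ) < (cB:ℝ) by linarith),
                  mul_nonneg (show (0:ℝ) ≤ 2*q - 1 by linarith) hcABpos]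
              · nlinarith [mul_le_mul_of_nonneg_left hcABm (show (0:ℝ) ≤ 1 - q by linarith),
                  mul_pos (show (0:ℝ) < 3*q - 1 by linarith)
                    (show (0:ℝ) < (m:ℝ) by linarith)]
            have hAB_lt_B : totalPayoff G q r (σ n) v Strat.AB <
                totalPayoff G q r (σ n) v Strat.B := by
              rw [hpay, hpay]
              simp only [pairPayoff]
              rcases hcase with hq | ⟨hq, hrq, hqr⟩
              · rw [max_eq_left (by linarith : 1 - q ≤ q)]
                nlinarith [mul_pos hr0 (show (0:ℝ) < (cB:ℝ) + (cAB:ℝ) by linarith)]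
              · rw [max_eq_right (by linarith : q ≤ 1 - q)]
                nlinarith [mul_le_mul_of_nonneg_left hcABm (show (0:ℝ) ≤ 1 - 2*q by linarith),
                  mul_pos (show (0:ℝ) < 2*r - (1 - 2*q) by linarith)
                    (show (0:ℝ) < (m:ℝ) by linarith),
                  mul_nonneg hr0.le hcA0R.ge]
            cases hS : σ (n+1) v with
            | A => exact absurd (hS ▸ hbrv Strat.B) (not_le.mpr hA_lt_B)
            | B => rfl
            | AB => exact absurd (hS ▸ hbrv Strat.B) (not_le.mpr hAB_lt_B)
          · -- v ∈ SAB
            intro hv hS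
            have hFB : m ≤ (N.filter (· ∈ SB)).card := by
              rw [← hdegIn, ← hhalf]; exact hdegAB v hv
            have hcBm : (m : ℝ) ≤ (cB : ℝ) := by
              have := le_trans hFB (Finset.card_le_card hSBsub)
              exact_mod_cast this
            have hcApos : (0:ℝ) ≤ (cA : ℝ) := Nat.cast_nonneg _
            have hcABpos : (0:ℝ) ≤ (cAB : ℝ) := Nat.cast_nonneg _
            rcases hcase with hq | ⟨hq, hrq, hqr⟩
            · have hA_lt_B : totalPayoff G q r (σ n) v Strat.A <
                  totalPayoff G q r (σ n) v Strat.B := by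
                rw [hpay, hpay]
                simp only [pairPayoff]
                nlinarith [mul_pos (show (0:ℝ) < 2*q - 1 by linarith)
                    (show (0:ℝ) < (cB:ℝ) by linarith),
                  mul_nonneg (show (0:ℝ) ≤ 1 - q by linarith)
                    (show (0:ℝ) ≤ (cB:ℝ) - ((cA:ℝ) + (cAB:ℝ)) by linarith),
                  mul_nonneg hq0.le hcABpos]
              exact absurd (hS ▸ hbrv Strat.B) (not_le.mpr hA_lt_B)
            · have hA_lt_AB : totalPayoff G q r (σ n) v Strat.A <
                  totalPayoff G q r (σ n) v Strat.AB := by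
                rw [hpay, hpay]
                simp only [pairPayoff]
                rw [max_eq_right (by linarith : q ≤ 1 - q)]
                have hq2r : r * ((cA:ℝ) + cB + cAB) = r * (2*m) := by rw [hsumc]
                nlinarith [mul_le_mul_of_nonneg_left hcBm hq0.le,
                  mul_pos (show (0:ℝ) < q - 2*r by linarith)
                    (show (0:ℝ) < (m:ℝ) by linarith), hq2r]
              exact absurd (hS ▸ hbrv Strat.AB) (not_le.mpr hA_lt_AB)
        exact ⟨fun v hv => (main v).1 hv, fun v hv => (main v).2 hv⟩
  obtain ⟨v, hv⟩ := hSBne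
  obtain ⟨n, hn⟩ := hall v
  rw [(key n).1 v hv] at hn
  exact Strat.noConfusion hn

end Contagion
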